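/- For every integer n ≥ 1, the set Ω_{(1+i)ⁿ} = {r + s·i : r, s ∈ ℤ, 0 ≤ r < 2^⌈n/2⌉, 0 ≤ s < 2^{n−⌈n/2⌉}} is a complete set of representatives for ℤ[i]/((1+i)ⁿ); that is, every Gaussian integer is congruent modulo (1+i)ⁿ to exactly one element of Ω_{(1+i)ⁿ}. -/

import Mathlib

noncomputable section

open Zsqrtd

lemma aux_unit_i : IsUnit (sqrtd : GaussianInt) :=
  IsUnit.of_mul_eq_one (-sqrtd) (by ext <;> simp [Zsqrtd.re_mul, Zsqrtd.im_mul])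

lemma aux_pow_even (k : ℕ) :
    ((1 + sqrtd)^(2*k) : GaussianInt) = ((2^k : ℤ) : GaussianInt) * sqrtd ^ k := by
  rw [pow_mul]
  have h2 : ((1 + sqrtd)^2 : GaussianInt) = 2 * sqrtd := by
    ext <;> simp [pow_two, Zsqrtd.re_mul, Zsqrtd.im_mul]
  rw [h2, mul_pow]; push_cast; ring

lemma aux_dvd_even (k : ℕ) (u : GaussianInt) :
    ((1 + sqrtd)^(2*k) : GaussianInt) ∣ u ↔ (2^k : ℤ) ∣ u.re ∧ (2^k : ℤ) ∣ u.im := by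
  rw [aux_pow_even, ← Zsqrtd.intCast_dvd]
  exact (associated_mul_unit_right _ _ (aux_unit_i.pow k)).symm.dvd_iff_dvd_left

lemma aux_dvd_odd (k : ℕ) (u : GaussianInt) :
    ((1 + sqrtd)^(2*k+1) : GaussianInt) ∣ u ↔
      (2^k : ℤ) ∣ u.re ∧ (2^k : ℤ) ∣ u.im ∧ (2^(k+1) : ℤ) ∣ (u.re + u.im) := by
  have key : ((1 + sqrtd)^(2*k+1) : GaussianInt) ∣ u ↔
      (((2^k : ℤ) : GaussianInt) * (1 + sqrtd)) ∣ u := by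
    rw [pow_succ, aux_pow_even]
    constructor
    · rintro ⟨v, rfl⟩
      exact ⟨sqrtd ^ k * v, by ring⟩
    · rintro ⟨v, rfl⟩
      obtain ⟨w, hw⟩ := (aux_unit_i.pow k).exists_right_inv
      exact ⟨w * v, by rw [show ((2^k : ℤ) : GaussianInt) * sqrtd ^ k * (1 + sqrtd) * (w * v)
        = ((2^k : ℤ) : GaussianInt) * (1+sqrtd) * v * (sqrtd ^ k * w) by ring, hw, mul_one]⟩
  rw [key]
  constructor
  · rintro ⟨v, rfl⟩
    refine ⟨⟨v.re - v.im, ?_⟩, ⟨v.re + v.im, ?_⟩, ⟨v.re, ?_⟩⟩ <;>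
      simp only [Zsqrtd.re_mul, Zsqrtd.im_mul, Zsqrtd.re_intCast, Zsqrtd.im_intCast,
        Zsqrtd.re_add, Zsqrtd.im_add, Zsqrtd.re_one, Zsqrtd.im_one, Zsqrtd.re_sqrtd,
        Zsqrtd.im_sqrtd] <;> ring
  · rintro ⟨⟨a', ha⟩, hb, ⟨s, hs⟩⟩
    refine ⟨⟨s, s - a'⟩, ?_⟩
    ext <;> simp only [Zsqrtd.re_mul, Zsqrtd.im_mul, Zsqrtd.re_intCast, Zsqrtd.im_intCast,
      Zsqrtd.re_add, Zsqrtd.im_add, Zsqrtd.re_one, Zsqrtd.im_one, Zsqrtd.re_sqrtd,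
      Zsqrtd.im_sqrtd]
    · linear_combination ha
    · linear_combination hs - ha

lemma aux_ceil_half (n : ℕ) : ⌈(n:ℚ)/2⌉₊ = (n+1)/2 := by
  rcases Nat.even_or_odd n with ⟨k, rfl⟩ | ⟨k, rfl⟩
  · have : ((k+k:ℕ):ℚ)/2 = (k:ℚ) := by push_cast; ring
    rw [this, Nat.ceil_natCast]; omega
  · have h : ⌈((2*k+1:ℕ):ℚ)/2⌉₊ = k+1 := by
      rw [Nat.ceil_eq_iff (by omega)]
      constructor <;> push_cast <;> [linarith; linarith]
    rw [h]; omega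

/-- For every integer `n ≥ 1`, the set
`Ω_{(1+i)ⁿ} = {r + s·i : r, s ∈ ℤ, 0 ≤ r < 2^⌈n/2⌉, 0 ≤ s < 2^{n−⌈n/2⌉}}`
is a complete set of representatives for `ℤ[i]/((1+i)ⁿ)`: every Gaussian
integer is congruent modulo `(1+i)ⁿ` to exactly one element of it. -/
theorem stmt1 (n : ℕ) (hn : 1 ≤ n) (z : GaussianInt) :
    ∃! w : GaussianInt,
      (0 ≤ w.re ∧ w.re < 2 ^ ⌈(n : ℚ) / 2⌉₊ ∧
        0 ≤ w.im ∧ w.im < 2 ^ (n - ⌈(n : ℚ) / 2⌉₊)) ∧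
      ((1 + Zsqrtd.sqrtd) ^ n : GaussianInt) ∣ (z - w) := by
  rcases Nat.even_or_odd n with ⟨k, hk⟩ | ⟨k, hk⟩
  · -- even case: n = 2k
    subst hk
    rw [show ⌈((k+k:ℕ):ℚ)/2⌉₊ = k from by rw [aux_ceil_half]; omega,
        show k + k - k = k from by omega,
        show k + k = 2*k from by omega]
    have pk : (0:ℤ) < 2^k := by positivity
    have e1 : (2^k:ℤ) ∣ z.re - z.re % 2^k :=
      ⟨z.re / 2^k, by rw [Int.emod_def]; ring⟩
    have e2 : (2^k:ℤ) ∣ z.im - z.im % 2^k :=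
      ⟨z.im / 2^k, by rw [Int.emod_def]; ring⟩
    refine ⟨⟨z.re % 2^k, z.im % 2^k⟩,
      ⟨⟨Int.emod_nonneg _ pk.ne', Int.emod_lt_of_pos _ pk,
        Int.emod_nonneg _ pk.ne', Int.emod_lt_of_pos _ pk⟩, ?_⟩, ?_⟩
    · rw [aux_dvd_even]
      exact ⟨e1, e2⟩
    · rintro w' ⟨⟨h1, h2, h3, h4⟩, hd⟩
      rw [aux_dvd_even] at hd
      obtain ⟨d1, d2⟩ := hd
      simp only [Zsqrtd.re_sub, Zsqrtd.im_sub] at d1 d2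
      have r1 : w'.re = z.re % 2^k := by
        have hdvd : (2^k:ℤ) ∣ z.re % 2^k - w'.re := by
          have : (2^k:ℤ) ∣ _ := dvd_sub d1 e1
          convert this using 1; ring
        have h0 := Int.eq_zero_of_abs_lt_dvd hdvd (by
          rw [abs_lt]
          have := Int.emod_nonneg z.re pk.ne'
          have := Int.emod_lt_of_pos z.re pk
          constructor <;> linarith)
        linarith [h0]
      have r2 : w'.im = z.im % 2^k := by
        have hdvd : (2^k:ℤ) ∣ z.im % 2^k - w'.im := by
          have : (2^k:ℤ) ∣ _ := dvd_sub d2 e2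
          convert this using 1; ring
        have h0 := Int.eq_zero_of_abs_lt_dvd hdvd (by
          rw [abs_lt]
          have := Int.emod_nonneg z.im pk.ne'
          have := Int.emod_lt_of_pos z.im pk
          constructor <;> linarith)
        linarith [h0]
      ext <;> simp [r1, r2]
  · -- odd case: n = 2k+1
    subst hk
    rw [show ⌈((2*k+1:ℕ):ℚ)/2⌉₊ = k+1 from by rw [aux_ceil_half]; omega,
        show 2*k+1 - (k+1) = k from by omega]
    have pk : (0:ℤ) < 2^k := by positivity
    have pk1 : (0:ℤ) < 2^(k+1) := by positivity
    set b : ℤ := z.im - z.im % 2^k with hb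
    have eb : (2^k:ℤ) ∣ b := ⟨z.im / 2^k, by rw [hb, Int.emod_def]; ring⟩
    have e3 : (2^(k+1):ℤ) ∣ (z.re + b) - (z.re + b) % 2^(k+1) :=
      ⟨(z.re + b) / 2^(k+1), by rw [Int.emod_def]; ring⟩
    refine ⟨⟨(z.re + b) % 2^(k+1), z.im % 2^k⟩,
      ⟨⟨Int.emod_nonneg _ pk1.ne', Int.emod_lt_of_pos _ pk1,
        Int.emod_nonneg _ pk.ne', Int.emod_lt_of_pos _ pk⟩, ?_⟩, ?_⟩
    · rw [aux_dvd_odd]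
      simp only [Zsqrtd.re_sub, Zsqrtd.im_sub]
      refine ⟨?_, ?_, ?_⟩
      · -- 2^k ∣ z.re - (z.re+b)%2^(k+1)
        have hsum : (2^(k+1):ℤ) ∣ (z.re - (z.re + b) % 2^(k+1)) + b := by
          convert e3 using 1; ring
        have hk1 : (2^k:ℤ) ∣ 2^(k+1) := pow_dvd_pow 2 (by omega)
        have : (2^k:ℤ) ∣ _ := dvd_sub (hk1.trans hsum) eb
        convert this using 1; ring
      · exact eb
      · convert e3 using 1; ring
    · rintro w' ⟨⟨h1, h2, h3, h4⟩, hd⟩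
      rw [aux_dvd_odd] at hd
      obtain ⟨d1, d2, d3⟩ := hd
      simp only [Zsqrtd.re_sub, Zsqrtd.im_sub] at d1 d2 d3
      have r2 : w'.im = z.im % 2^k := by
        have hdvd : (2^k:ℤ) ∣ z.im % 2^k - w'.im := by
          have : (2^k:ℤ) ∣ _ := dvd_sub d2 eb
          convert this using 1; rw [hb]; ring
        have h0 := Int.eq_zero_of_abs_lt_dvd hdvd (by
          rw [abs_lt]
          have := Int.emod_nonneg z.im pk.ne'
          have := Int.emod_lt_of_pos z.im pk
          constructor <;> linarith)
        linarith [h0]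
      have r1 : w'.re = (z.re + b) % 2^(k+1) := by
        have hsum : (2^(k+1):ℤ) ∣ (z.re - (z.re + b) % 2^(k+1)) + b := by
          convert e3 using 1; ring
        have hsum' : (2^(k+1):ℤ) ∣ (z.re - w'.re) + b := by
          have : z.im - w'.im = b := by rw [r2, hb]
          rw [← this]; exact d3
        have hdvd : (2^(k+1):ℤ) ∣ (z.re + b) % 2^(k+1) - w'.re := by
          have : (2^(k+1):ℤ) ∣ _ := dvd_sub hsum' hsum
          convert this using 1; ring
        have h0 := Int.eq_zero_of_abs_lt_dvd hdvd (by
          rw [abs_lt]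
          have := Int.emod_nonneg (z.re + b) pk1.ne'
          have := Int.emod_lt_of_pos (z.re + b) pk1
          constructor <;> linarith)
        linarith [h0]
      ext <;> simp [r1, r2]
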